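/- For 0 < α ≤ 1, the margin-based α-loss z ↦ (α/(α-1))(1 - σ(z)^{1-1/α}) (with the case α=1 given by -log σ(z)) is convex on ℝ. -/

import Mathlib

noncomputable def sigmoid (z : ℝ) : ℝ := 1 / (1 + Real.exp (-z))

noncomputable def alphaLoss (α z : ℝ) : ℝ :=
  if α = 1 then -Real.log (sigmoid z)
  else (α / (α - 1)) * (1 - sigmoid z ^ (1 - 1 / α))

lemma hasDerivAt_one_add_exp_neg (z : ℝ) :
    HasDerivAt (fun z : ℝ => 1 + Real.exp (-z)) (-Real.exp (-z)) z := by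
  simpa using ((Real.hasDerivAt_exp (-z)).comp z (hasDerivAt_neg z)).const_add 1

lemma one_add_exp_neg_pos (z : ℝ) : (0:ℝ) < 1 + Real.exp (-z) := by positivity

lemma softplus_convexOn :
    ConvexOn ℝ Set.univ (fun z : ℝ => Real.log (1 + Real.exp (-z))) := by
  apply convexOn_of_hasDerivWithinAt2_nonneg (f' := fun z => -Real.exp (-z) / (1 + Real.exp (-z)))
    (f'' := fun z => Real.exp (-z) / (1 + Real.exp (-z)) ^ 2) convex_univ
  · exact (Continuous.log (by continuity) fun z => (one_add_exp_neg_pos z).ne').continuousOn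
  · intro x _
    exact (((hasDerivAt_one_add_exp_neg x).log (one_add_exp_neg_pos x).ne')).hasDerivWithinAt
  · intro x _
    have h1 := hasDerivAt_one_add_exp_neg x
    have hc : HasDerivAt (fun z : ℝ => -Real.exp (-z)) (Real.exp (-x)) x := by
      simpa using h1.neg.const_add 1
    have := hc.div h1 (one_add_exp_neg_pos x).ne'
    refine (HasDerivAt.hasDerivWithinAt ?_)
    convert this using 1
    · rfl
    · rfl
    have hx := (one_add_exp_neg_pos x).ne'
    field_simp
    ring
  · intro x _
    positivity

lemma rpow_one_add_exp_convexOn {β : ℝ} (hβ : 0 ≤ β) :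
    ConvexOn ℝ Set.univ (fun z : ℝ => (1 + Real.exp (-z)) ^ β) := by
  apply convexOn_of_hasDerivWithinAt2_nonneg
    (f' := fun z => (-Real.exp (-z)) * β * (1 + Real.exp (-z)) ^ (β - 1))
    (f'' := fun z => β * Real.exp (-z) * (1 + Real.exp (-z)) ^ (β - 2)
      * (1 + β * Real.exp (-z))) convex_univ
  · exact (Continuous.rpow_const (by continuity)
      fun z => Or.inl (one_add_exp_neg_pos z).ne').continuousOn
  · intro x _
    exact ((hasDerivAt_one_add_exp_neg x).rpow_const
      (Or.inl (one_add_exp_neg_pos x).ne')).hasDerivWithinAt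
  · intro x _
    have hx := one_add_exp_neg_pos x
    have hu : HasDerivAt (fun z : ℝ => -Real.exp (-z) * β) (Real.exp (-x) * β) x := by
      simpa using ((hasDerivAt_one_add_exp_neg x).neg.const_add 1).mul_const β
    have hv : HasDerivAt (fun z : ℝ => (1 + Real.exp (-z)) ^ (β - 1))
        ((-Real.exp (-x)) * (β - 1) * (1 + Real.exp (-x)) ^ (β - 1 - 1)) x :=
      (hasDerivAt_one_add_exp_neg x).rpow_const (Or.inl hx.ne')
    refine (HasDerivAt.hasDerivWithinAt ?_)
    convert hu.mul hv using 1
    · rfl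
    · rfl
    have h1 : (1 + Real.exp (-x)) ^ (β - 1)
        = (1 + Real.exp (-x)) ^ (β - 2) * (1 + Real.exp (-x)) := by
      rw [← Real.rpow_add_one hx.ne' (β - 2)]; ring_nf
    have h2 : β - 1 - 1 = β - 2 := by ring
    rw [h2, h1]
    ring
  · intro x _
    have hx := one_add_exp_neg_pos x
    have h1 : (0:ℝ) ≤ (1 + Real.exp (-x)) ^ (β - 2) := by positivity
    have h2 : (0:ℝ) ≤ 1 + β * Real.exp (-x) := by
      have := Real.exp_pos (-x); nlinarith
    have h3 : (0:ℝ) ≤ β * Real.exp (-x) := by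
      have := Real.exp_pos (-x); nlinarith
    exact mul_nonneg (mul_nonneg h3 h1) h2

theorem alphaLoss_convexOn (α : ℝ) (hα : 0 < α) (hα1 : α ≤ 1) :
    ConvexOn ℝ Set.univ (fun z => alphaLoss α z) := by
  by_cases h1 : α = 1
  · subst h1
    have : (fun z : ℝ => alphaLoss 1 z)
        = fun z : ℝ => Real.log (1 + Real.exp (-z)) := by
      funext z
      simp [alphaLoss, sigmoid, Real.log_inv]
    rw [this]
    exact softplus_convexOn
  · have hlt : α < 1 := lt_of_le_of_ne hα1 h1
    set β : ℝ := 1 / α - 1 with hβdef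
    have hβ : 0 ≤ β := by
      rw [hβdef, sub_nonneg, le_div_iff₀ hα]; linarith
    have hc : 0 ≤ α / (1 - α) := by
      apply div_nonneg hα.le; linarith
    have key : (fun z : ℝ => alphaLoss α z)
        = fun z : ℝ => (α / (1 - α)) • ((1 + Real.exp (-z)) ^ β) + α / (α - 1) := by
      funext z
      have hx := one_add_exp_neg_pos z
      have hs : sigmoid z ^ (1 - 1 / α) = (1 + Real.exp (-z)) ^ β := by
        rw [sigmoid, one_div, ← Real.rpow_neg_one (1 + Real.exp (-z)),
          ← Real.rpow_mul hx.le]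
        congr 1
        rw [hβdef]; ring
      simp only [alphaLoss, if_neg h1, hs, smul_eq_mul]
      have hne : α - 1 ≠ 0 := by intro h; apply h1; linarith
      have hne' : (1:ℝ) - α ≠ 0 := by intro h; apply h1; linarith
      field_simp
      ring
    rw [key]
    exact ((rpow_one_add_exp_convexOn hβ).smul hc).add_const _
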